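/- Let G be a uniquely 4-colourable graph with a triangle on vertices v1, v2, v3 and a proper 4-colouring φ with φ(v_i) = i. Form G'' by adding vertices a, b, c with triangle abc and edges a v1, a v2, b v1, b v3, c v2, c v3. Label the arcs (v2, a), (c, a), (c, b), (v3, c) with the 4-cycle (1 2 3 4), and label all other (arbitrarily oriented) edges with id. Then no proper 4-colouring ψ of this labeled graph restricts on G to φ. -/
import Mathlib


/-- `P` is a partition of the vertex set of `G` into `k` nonempty independent sets. -/
def IsIndepPartition {V : Type*} (G : SimpleGraph V) (k : ℕ) (P : Set (Set V)) : Prop :=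
  (∀ s ∈ P, s.Nonempty) ∧ (∀ v : V, ∃! s, s ∈ P ∧ v ∈ s) ∧
  (∀ s ∈ P, ∀ u ∈ s, ∀ v ∈ s, ¬ G.Adj u v) ∧ P.ncard = k

/-- `G` is uniquely `k`-colourable. -/
def UniquelyColourable {V : Type*} (G : SimpleGraph V) (k : ℕ) : Prop :=
  ∃! P : Set (Set V), IsIndepPartition G k P

/-- `D` is an orientation of `G`. -/
def IsOrientation {V : Type*} (G : SimpleGraph V) (D : V → V → Prop) : Prop :=
  (∀ u v, D u v → G.Adj u v) ∧ (∀ u v, G.Adj u v → D u v ∨ D v u) ∧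
  (∀ u v, D u v → ¬ D v u)

/-- The gadget graph `G''`: `G` together with a new triangle `a = inr 0`, `b = inr 1`,
`c = inr 2` and the edges `a v₁, a v₂, b v₁, b v₃, c v₂, c v₃`. -/
def gadgetGraph {V : Type*} (G : SimpleGraph V) (v₁ v₂ v₃ : V) : SimpleGraph (V ⊕ Fin 3) :=
  SimpleGraph.fromRel (fun x y =>
    match x, y with
    | Sum.inl x', Sum.inl y' => G.Adj x' y'
    | Sum.inr i, Sum.inr j => i ≠ j
    | Sum.inr i, Sum.inl z =>
        (i = 0 ∧ (z = v₁ ∨ z = v₂)) ∨ (i = 1 ∧ (z = v₁ ∨ z = v₃)) ∨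
        (i = 2 ∧ (z = v₂ ∨ z = v₃))
    | Sum.inl _, Sum.inr _ => False)

/-- The 4-cycle `(1 2 3 4)` on the four colours (colour `i ∈ {1,2,3,4}` is `i - 1 : Fin 4`). -/
def p1234 : Equiv.Perm (Fin 4) :=
  ⟨![1, 2, 3, 0], ![3, 0, 1, 2], by decide, by decide⟩

/-- With the `{id, (1234)}`-labeling in which the arcs `(v₂,a)`, `(c,a)`, `(c,b)`, `(v₃,c)`
carry the label `(1 2 3 4)` and all other arcs carry `id`, no proper 4-colouring of the
labeled gadget graph restricts on `G` to the colouring `φ`. -/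
theorem gadget_1234_blocks {V : Type*} (G : SimpleGraph V) (v₁ v₂ v₃ : V)
    (hG : UniquelyColourable G 4)
    (h12 : G.Adj v₁ v₂) (h13 : G.Adj v₁ v₃) (h23 : G.Adj v₂ v₃)
    (φ : V → Fin 4) (hφ : ∀ u v, G.Adj u v → φ u ≠ φ v)
    (hφ1 : φ v₁ = 0) (hφ2 : φ v₂ = 1) (hφ3 : φ v₃ = 2)
    (D : (V ⊕ Fin 3) → (V ⊕ Fin 3) → Prop)
    (hD : IsOrientation (gadgetGraph G v₁ v₂ v₃) D)
    (hv2a : D (Sum.inl v₂) (Sum.inr 0)) (hca : D (Sum.inr 2) (Sum.inr 0))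
    (hcb : D (Sum.inr 2) (Sum.inr 1)) (hv3c : D (Sum.inl v₃) (Sum.inr 2))
    (σ : (V ⊕ Fin 3) → (V ⊕ Fin 3) → Equiv.Perm (Fin 4))
    (hσ1 : σ (Sum.inl v₂) (Sum.inr 0) = p1234) (hσ2 : σ (Sum.inr 2) (Sum.inr 0) = p1234)
    (hσ3 : σ (Sum.inr 2) (Sum.inr 1) = p1234) (hσ4 : σ (Sum.inl v₃) (Sum.inr 2) = p1234)
    (hσid : ∀ x y, D x y →
      ¬ ((x = Sum.inl v₂ ∧ y = Sum.inr 0) ∨ (x = Sum.inr 2 ∧ y = Sum.inr 0) ∨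
         (x = Sum.inr 2 ∧ y = Sum.inr 1) ∨ (x = Sum.inl v₃ ∧ y = Sum.inr 2)) → σ x y = 1) :
    ¬ ∃ ψ : (V ⊕ Fin 3) → Fin 4,
        (∀ v : V, ψ (Sum.inl v) = φ v) ∧ (∀ x y, D x y → σ x y (ψ x) ≠ ψ y) := by

  rintro ⟨ψ, hres, hψ⟩
  have hne12 : v₁ ≠ v₂ := h12.ne
  have hne13 : v₁ ≠ v₃ := h13.ne
  have hne23 : v₂ ≠ v₃ := h23.ne
  -- id edges give distinctness
  have idne : ∀ x y : V ⊕ Fin 3, (gadgetGraph G v₁ v₂ v₃).Adj x y →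
      (¬ ((x = Sum.inl v₂ ∧ y = Sum.inr 0) ∨ (x = Sum.inr 2 ∧ y = Sum.inr 0) ∨
         (x = Sum.inr 2 ∧ y = Sum.inr 1) ∨ (x = Sum.inl v₃ ∧ y = Sum.inr 2))) →
      (¬ ((y = Sum.inl v₂ ∧ x = Sum.inr 0) ∨ (y = Sum.inr 2 ∧ x = Sum.inr 0) ∨
         (y = Sum.inr 2 ∧ x = Sum.inr 1) ∨ (y = Sum.inl v₃ ∧ x = Sum.inr 2))) →
      ψ x ≠ ψ y := by
    intro x y hadj hns1 hns2
    rcases hD.2.1 x y hadj with h | h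
    · have := hψ x y h
      rwa [hσid x y h hns1, Equiv.Perm.one_apply] at this
    · have := hψ y x h
      rw [hσid y x h hns2, Equiv.Perm.one_apply] at this
      exact (Ne.symm this)
  have adj_av1 : (gadgetGraph G v₁ v₂ v₃).Adj (Sum.inr 0) (Sum.inl v₁) := by
    simp [gadgetGraph]
  have adj_bv1 : (gadgetGraph G v₁ v₂ v₃).Adj (Sum.inr 1) (Sum.inl v₁) := by
    simp [gadgetGraph]
  have adj_bv3 : (gadgetGraph G v₁ v₂ v₃).Adj (Sum.inr 1) (Sum.inl v₃) := by
    simp [gadgetGraph]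
  have adj_cv2 : (gadgetGraph G v₁ v₂ v₃).Adj (Sum.inr 2) (Sum.inl v₂) := by
    simp [gadgetGraph]
  have adj_ab : (gadgetGraph G v₁ v₂ v₃).Adj (Sum.inr 0) (Sum.inr 1) := by
    simp [gadgetGraph]
  have hA0 : ψ (Sum.inr 0) ≠ ψ (Sum.inl v₁) := by
    apply idne _ _ adj_av1 <;> simp [hne12, hne13, hne12.symm, hne13.symm]
  have hB0 : ψ (Sum.inr 1) ≠ ψ (Sum.inl v₁) := by
    apply idne _ _ adj_bv1 <;> simp [hne12, hne13, hne12.symm, hne13.symm]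
  have hB2 : ψ (Sum.inr 1) ≠ ψ (Sum.inl v₃) := by
    apply idne _ _ adj_bv3 <;> simp [hne23, hne13]
  have hC1 : ψ (Sum.inr 2) ≠ ψ (Sum.inl v₂) := by
    apply idne _ _ adj_cv2 <;> simp [hne23, hne23.symm]
  have hAB : ψ (Sum.inr 0) ≠ ψ (Sum.inr 1) := by
    apply idne _ _ adj_ab <;> simp
  have hA2 : p1234 (ψ (Sum.inl v₂)) ≠ ψ (Sum.inr 0) := by
    have := hψ _ _ hv2a; rwa [hσ1] at this
  have hCA : p1234 (ψ (Sum.inr 2)) ≠ ψ (Sum.inr 0) := by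
    have := hψ _ _ hca; rwa [hσ2] at this
  have hCB : p1234 (ψ (Sum.inr 2)) ≠ ψ (Sum.inr 1) := by
    have := hψ _ _ hcb; rwa [hσ3] at this
  have hC3 : p1234 (ψ (Sum.inl v₃)) ≠ ψ (Sum.inr 2) := by
    have := hψ _ _ hv3c; rwa [hσ4] at this
  rw [hres v₁, hφ1] at hA0 hB0
  rw [hres v₂, hφ2] at hC1 hA2
  rw [hres v₃, hφ3] at hB2 hC3
  revert hA0 hB0 hB2 hC1 hAB hA2 hCA hCB hC3
  generalize ψ (Sum.inr 0) = A
  generalize ψ (Sum.inr 1) = B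
  generalize ψ (Sum.inr 2) = C
  revert A B C
  decide
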